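/- Let d ∈ ℕ, d ≥ 1, ρ a density matrix on ℂ^d, {P(f)}_{f∈Ω} a PVM on a nonempty finite set Ω, and U : ℝ → M_d(ℂ) a family of unitary matrices. Then for every n ∈ ℕ and all times t_1 < … < t_n, the ℓ¹-norm of the quantum bi-probability satisfies Σ_{f⁺,f⁻ ∈ Ω^n} |Q_{t_n,…,t_1}(f⁺,f⁻)| ≤ |Ω|^n, where |Ω| is the cardinality of Ω. -/

import Mathlib

open Matrix
open scoped ComplexOrder

/-- The Heisenberg-picture projection at time `t`: `P_t(f) = U(t)* P(f) U(t)`. -/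
noncomputable def heisenbergProj {d : ℕ} {Ω : Type*}
    (P : Ω → Matrix (Fin d) (Fin d) ℂ) (U : ℝ → Matrix (Fin d) (Fin d) ℂ)
    (t : ℝ) (f : Ω) : Matrix (Fin d) (Fin d) ℂ :=
  (U t)ᴴ * P f * U t

/-- The quantum bi-probability
`Q_{t_n,…,t_1}(f⁺,f⁻) = tr[P_{t_n}(f_n⁺)⋯P_{t_1}(f_1⁺) ρ P_{t_1}(f_1⁻)⋯P_{t_n}(f_n⁻)]`,
where indices `j : Fin n` are ordered so that `j = 0` corresponds to the earliest time `t_1`. -/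
noncomputable def quantumBiProb {d : ℕ} {Ω : Type*}
    (ρ : Matrix (Fin d) (Fin d) ℂ) (P : Ω → Matrix (Fin d) (Fin d) ℂ)
    (U : ℝ → Matrix (Fin d) (Fin d) ℂ) {n : ℕ} (t : Fin n → ℝ)
    (fp fm : Fin n → Ω) : ℂ :=
  Matrix.trace
    ((List.ofFn fun j => heisenbergProj P U (t j) (fp j)).reverse.prod * ρ *
      (List.ofFn fun j => heisenbergProj P U (t j) (fm j)).prod)

section Aux

variable {d : ℕ} {Ω : Type*} [Fintype Ω]

lemma reverse_prod_eq_conjTranspose (L : List (Matrix (Fin d) (Fin d) ℂ))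
    (h : ∀ M ∈ L, Mᴴ = M) : L.reverse.prod = L.prodᴴ := by
  rw [Matrix.conjTranspose_list_prod]
  have : L.map conjTranspose = L := by
    calc L.map conjTranspose = L.map id := List.map_congr_left h
      _ = L := List.map_id L
  rw [this]

lemma sum_prod_mul_conjTranspose :
    ∀ (n : ℕ) (Q : Fin n → Ω → Matrix (Fin d) (Fin d) ℂ),
      (∀ j f, (Q j f)ᴴ = Q j f) → (∀ j f, Q j f * Q j f = Q j f) →
      (∀ j, ∑ f, Q j f = 1) →
      ∑ f : Fin n → Ω, (List.ofFn fun j => Q j (f j)).prod *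
        ((List.ofFn fun j => Q j (f j)).prod)ᴴ = 1 := by
  intro n
  induction n with
  | zero => intro Q _ _ _; simp
  | succ n ih =>
    intro Q hH hI hS
    rw [← (Fin.consEquiv fun _ => Ω).sum_comp, Fintype.sum_prod_type]
    have key : ∀ (a : Ω) (g : Fin n → Ω),
        (List.ofFn fun j => Q j ((Fin.consEquiv fun _ => Ω) (a, g) j)).prod *
          ((List.ofFn fun j => Q j ((Fin.consEquiv fun _ => Ω) (a, g) j)).prod)ᴴ
        = Q 0 a * (((List.ofFn fun i => Q i.succ (g i)).prod) *
            ((List.ofFn fun i => Q i.succ (g i)).prod)ᴴ) * Q 0 a := by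
      intro a g
      simp only [Fin.consEquiv_apply, List.ofFn_succ, Fin.cons_zero, Fin.cons_succ,
        List.prod_cons, Matrix.conjTranspose_mul, hH 0 a, Matrix.mul_assoc]
    simp only [key]
    have inner_sum : ∀ a : Ω,
        ∑ g : Fin n → Ω, Q 0 a * (((List.ofFn fun i => Q i.succ (g i)).prod) *
            ((List.ofFn fun i => Q i.succ (g i)).prod)ᴴ) * Q 0 a = Q 0 a := by
      intro a
      rw [← Finset.sum_mul, ← Finset.mul_sum,
        ih (fun i => Q i.succ) (fun i f => hH i.succ f) (fun i f => hI i.succ f)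
          (fun i => hS i.succ), mul_one, hI]
    simp only [inner_sum]
    exact hS 0

end Aux

/-- the ℓ¹-norm of the quantum bi-probability is bounded by `|Ω|^n`. -/
theorem quantumBiProb_l1_le_card_pow {d : ℕ} (hd : 1 ≤ d)
    {Ω : Type*} [Fintype Ω] [Nonempty Ω] [DecidableEq Ω]
    (ρ : Matrix (Fin d) (Fin d) ℂ) (hρ : ρ.PosSemidef) (hρtr : ρ.trace = 1)
    (P : Ω → Matrix (Fin d) (Fin d) ℂ)
    (hPsa : ∀ f, (P f).IsHermitian) (hPidem : ∀ f, P f * P f = P f)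
    (hPorth : ∀ f f', f ≠ f' → P f * P f' = 0) (hPsum : ∑ f, P f = 1)
    (U : ℝ → Matrix (Fin d) (Fin d) ℂ)
    (hU : ∀ t, U t ∈ Matrix.unitaryGroup (Fin d) ℂ)
    (n : ℕ) (t : Fin n → ℝ) (ht : StrictMono t) :
    ∑ fp : Fin n → Ω, ∑ fm : Fin n → Ω, ‖quantumBiProb ρ P U t fp fm‖
      ≤ (Fintype.card Ω : ℝ) ^ n := by
  -- square root of ρ
  obtain ⟨S, hSH, hSS⟩ : ∃ S : Matrix (Fin d) (Fin d) ℂ, Sᴴ = S ∧ S * S = ρ :=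
    open scoped MatrixOrder in ⟨CFC.sqrt ρ, (CFC.sqrt_nonneg ρ).isSelfAdjoint, CFC.sqrt_mul_sqrt_self ρ hρ.nonneg⟩
  -- Heisenberg projections and their PVM properties
  set H : Fin n → Ω → Matrix (Fin d) (Fin d) ℂ :=
    fun j f => heisenbergProj P U (t j) f with hHdef
  have hUU : ∀ s, (U s)ᴴ * U s = 1 := fun s => by
    have := (Matrix.mem_unitaryGroup_iff'.mp (hU s))
    rwa [Matrix.star_eq_conjTranspose] at this
  have hUU' : ∀ s, U s * (U s)ᴴ = 1 := fun s => by
    have := (Matrix.mem_unitaryGroup_iff.mp (hU s))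
    rwa [Matrix.star_eq_conjTranspose] at this
  have hH : ∀ j f, (H j f)ᴴ = H j f := by
    intro j f
    simp [hHdef, heisenbergProj, Matrix.conjTranspose_mul, (hPsa f).eq, Matrix.mul_assoc]
  have hHI : ∀ j f, H j f * H j f = H j f := by
    intro j f
    show (U (t j))ᴴ * P f * U (t j) * ((U (t j))ᴴ * P f * U (t j)) = _
    have : (U (t j))ᴴ * P f * U (t j) * ((U (t j))ᴴ * P f * U (t j))
        = (U (t j))ᴴ * (P f * (U (t j) * (U (t j))ᴴ) * P f) * U (t j) := by
      simp only [Matrix.mul_assoc]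
    rw [this, hUU', Matrix.mul_one, hPidem]
    rfl
  have hHS : ∀ j, ∑ f, H j f = 1 := by
    intro j
    have : ∑ f, H j f = (U (t j))ᴴ * (∑ f, P f) * U (t j) := by
      simp [hHdef, heisenbergProj, Finset.mul_sum, Finset.sum_mul]
    rw [this, hPsum, Matrix.mul_one, hUU]
  -- the path operators
  set A : (Fin n → Ω) → Matrix (Fin d) (Fin d) ℂ :=
    fun f => (List.ofFn fun j => H j (f j)).prod with hAdef
  have hAsum : ∑ f : Fin n → Ω, A f * (A f)ᴴ = 1 :=
    sum_prod_mul_conjTranspose n H hH hHI hHS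
  -- embedding into Euclidean space
  set e : Matrix (Fin d) (Fin d) ℂ → EuclideanSpace ℂ (Fin d × Fin d) :=
    fun X => (WithLp.equiv 2 _).symm fun p => X p.1 p.2 with hedef
  have hinner : ∀ X Y : Matrix (Fin d) (Fin d) ℂ,
      (inner ℂ (e X) (e Y) : ℂ) = (Xᴴ * Y).trace := by
    intro X Y
    simp only [hedef, PiLp.inner_apply, RCLike.inner_apply, WithLp.equiv_symm_apply,
      Matrix.trace, Matrix.diag, Matrix.mul_apply, Matrix.conjTranspose_apply,
      Fintype.sum_prod_type, starRingEnd_apply]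
    rw [Finset.sum_comm]
    exact Finset.sum_congr rfl fun _ _ => Finset.sum_congr rfl fun _ _ => mul_comm _ _
  set v : (Fin n → Ω) → EuclideanSpace ℂ (Fin d × Fin d) := fun f => e (S * A f) with hvdef
  -- Q as an inner product
  have hQ : ∀ fp fm, quantumBiProb ρ P U t fp fm = inner ℂ (v fp) (v fm) := by
    intro fp fm
    rw [hvdef]
    simp only
    rw [hinner]
    unfold quantumBiProb
    have hrev : (List.ofFn fun j => heisenbergProj P U (t j) (fp j)).reverse.prod
        = (A fp)ᴴ := by
      apply reverse_prod_eq_conjTranspose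
      intro M hM
      rw [List.mem_ofFn] at hM
      obtain ⟨j, rfl⟩ := hM
      exact hH j (fp j)
    rw [hrev]
    congr 1
    rw [Matrix.conjTranspose_mul, hSH, ← hSS]
    simp only [Matrix.mul_assoc]
    rfl
  set N : (Fin n → Ω) → ℝ := fun f => ‖v f‖ with hNdef
  have hNsq : ∑ f : Fin n → Ω, N f ^ 2 = 1 := by
    have h1 : ∀ f : Fin n → Ω, N f ^ 2 = RCLike.re ((A f * (A f)ᴴ * ρ).trace) := by
      intro f
      rw [hNdef]
      simp only
      rw [← inner_self_eq_norm_sq (𝕜 := ℂ), hvdef]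
      simp only
      rw [hinner]
      congr 1
      rw [Matrix.conjTranspose_mul, hSH, ← hSS,
        show (A f)ᴴ * S * (S * A f) = (A f)ᴴ * (S * S * A f) by simp [Matrix.mul_assoc],
        Matrix.trace_mul_comm,
        show S * S * A f * (A f)ᴴ = S * S * (A f * (A f)ᴴ) by simp [Matrix.mul_assoc],
        Matrix.trace_mul_comm]
    simp only [h1]
    rw [← map_sum, ← Matrix.trace_sum, ← Finset.sum_mul, hAsum, Matrix.one_mul, hρtr]
    simp
  calc ∑ fp : Fin n → Ω, ∑ fm : Fin n → Ω, ‖quantumBiProb ρ P U t fp fm‖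
      ≤ ∑ fp : Fin n → Ω, ∑ fm : Fin n → Ω, N fp * N fm := by
        refine Finset.sum_le_sum fun fp _ => Finset.sum_le_sum fun fm _ => ?_
        rw [hQ]
        exact norm_inner_le_norm _ _
    _ = (∑ f : Fin n → Ω, N f) * (∑ f : Fin n → Ω, N f) := by
        rw [Finset.sum_mul_sum]
    _ = (∑ f : Fin n → Ω, N f * 1) ^ 2 := by rw [sq]; simp
    _ ≤ (∑ f : Fin n → Ω, N f ^ 2) * (∑ f : Fin n → Ω, (1 : ℝ) ^ 2) :=
        Finset.sum_mul_sq_le_sq_mul_sq _ _ _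
    _ = (Fintype.card Ω : ℝ) ^ n := by
        rw [hNsq, one_mul]
        simp [Fintype.card_fun]
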